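/- arXiv:1808.06682 — 4 statements merged into one kernel-verified Lean document; each statement's English description precedes it below -/
import Mathlib

section
/- Let 𝔸 be a Banach algebra over ℝ with unit and let A : ℝ → 𝔸 be a C^∞ map. Then the map t ↦ Φ^A(t), defined using the restriction of A to [0,1], is C^∞ on the interval [0,1] (smooth in the sense of ContDiffOn of every order, with one-sided derivatives at the endpoints). (Smoothness claim of the paper's Lemma 3.1, specialized to a point base.) -/
open MeasureTheory Set

variable {𝔸 : Type*} [NormedRing 𝔸] [NormedAlgebra ℝ 𝔸] [CompleteSpace 𝔸]

/-- Nested Chen iterated integral with accumulated product `x`: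
`chenAux A n x t = ∫₀ᵗ ∫₀^{s₁} ⋯ ∫₀^{sₙ₋₁} x * A s₁ * ⋯ * A sₙ dsₙ ⋯ ds₁`. -/
noncomputable def chenAux (A : ℝ → 𝔸) : ℕ → 𝔸 → ℝ → 𝔸
  | 0, x, _ => x
  | n + 1, x, t => ∫ s in (0:ℝ)..t, chenAux A n (x * A s) s

/-- The `n`-th Chen iterated integral
`Iₙ^A(t) = ∫₀ᵗ ∫₀^{s₁} ⋯ ∫₀^{sₙ₋₁} A(s₁) * A(s₂) * ⋯ * A(sₙ) dsₙ ⋯ ds₁`. -/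
noncomputable def chenI (A : ℝ → 𝔸) (n : ℕ) (t : ℝ) : 𝔸 :=
  chenAux A n 1 t

/-- The iterated-integral series (time-ordered exponential) `Φ^A(t) = ∑ₙ Iₙ^A(t)`. -/
noncomputable def chenPhi (A : ℝ → 𝔸) (t : ℝ) : 𝔸 :=
  ∑' n, chenI A n t

/-- Continuity of `chenI` together with the factorization `chenAux A n x t = x * chenI A n t`. -/
lemma chenI_key (A : ℝ → 𝔸) (hA : Continuous A) :
    ∀ n, Continuous (chenI A n) ∧ ∀ x t, chenAux A n x t = x * chenI A n t := by
  intro n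
  induction n with
  | zero => exact ⟨continuous_const, fun x t => (mul_one x).symm⟩
  | succ n ih =>
    obtain ⟨hc, he⟩ := ih
    have hf : Continuous fun s => A s * chenI A n s := hA.mul hc
    have haux : ∀ x t, chenAux A (n+1) x t
        = x * ∫ s in (0:ℝ)..t, A s * chenI A n s := by
      intro x t
      have h1 : chenAux A (n+1) x t = ∫ s in (0:ℝ)..t,
          (ContinuousLinearMap.mul ℝ 𝔸 x) (A s * chenI A n s) := by
        show (∫ s in (0:ℝ)..t, chenAux A n (x * A s) s) = _
        congr 1
        ext s
        simp [he, mul_assoc]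
      rw [h1, (ContinuousLinearMap.mul ℝ 𝔸 x).intervalIntegral_comp_comm
        (hf.intervalIntegrable 0 t)]
      simp
    have hIe : ∀ t, chenI A (n+1) t = ∫ s in (0:ℝ)..t, A s * chenI A n s := by
      intro t; rw [chenI, haux, one_mul]
    refine ⟨?_, fun x t => by rw [haux, hIe]⟩
    have hcont : Continuous fun t => ∫ s in (0:ℝ)..t, A s * chenI A n s :=
      intervalIntegral.continuous_primitive (fun a b => hf.intervalIntegrable a b) 0
    exact hcont.congr fun t => (hIe t).symm

/-- The recursion `chenI A (n+1) t = ∫₀ᵗ A s * chenI A n s ds`. -/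
lemma chenI_succ (A : ℝ → 𝔸) (hA : Continuous A) (n : ℕ) (t : ℝ) :
    chenI A (n+1) t = ∫ s in (0:ℝ)..t, A s * chenI A n s := by
  have h := (chenI_key A hA (n+1)).2 1 t
  rw [chenI, h, one_mul]
  apply intervalIntegral.integral_congr
  intro s _
  show chenAux A n (1 * A s) s = A s * chenI A n s
  rw [(chenI_key A hA n).2, one_mul]

/-- Factorial bound on the iterated integrals. -/
lemma chenI_norm_le (A : ℝ → 𝔸) (hA : Continuous A) {M : ℝ} (hM0 : 0 ≤ M)
    (hM : ∀ s ∈ Icc (0:ℝ) 1, ‖A s‖ ≤ M) :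
    ∀ n, ∀ t ∈ Icc (0:ℝ) 1,
      ‖chenI A n t‖ ≤ ‖(1:𝔸)‖ * (M ^ n * t ^ n / n.factorial) := by
  intro n
  induction n with
  | zero => intro t ht; simp [chenI, chenAux]
  | succ n ih =>
    intro t ht
    obtain ⟨ht0, ht1⟩ := ht
    have hc := (chenI_key A hA n).1
    have hf : Continuous fun s => A s * chenI A n s := hA.mul hc
    rw [chenI_succ A hA n t]
    have h1 : ‖∫ s in (0:ℝ)..t, A s * chenI A n s‖
        ≤ ∫ s in (0:ℝ)..t, ‖A s * chenI A n s‖ :=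
      intervalIntegral.norm_integral_le_integral_norm ht0
    have h2 : (∫ s in (0:ℝ)..t, ‖A s * chenI A n s‖)
        ≤ ∫ s in (0:ℝ)..t, (M * (‖(1:𝔸)‖ * (M ^ n / n.factorial))) * s ^ n := by
      apply intervalIntegral.integral_mono_on ht0
        (hf.norm.intervalIntegrable 0 t)
        ((by continuity : Continuous fun s : ℝ =>
          (M * (‖(1:𝔸)‖ * (M ^ n / n.factorial))) * s ^ n).intervalIntegrable 0 t)
      intro s hs
      have hs' : s ∈ Icc (0:ℝ) 1 := ⟨hs.1, hs.2.trans ht1⟩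
      calc ‖A s * chenI A n s‖ ≤ ‖A s‖ * ‖chenI A n s‖ := norm_mul_le _ _
        _ ≤ M * (‖(1:𝔸)‖ * (M ^ n * s ^ n / n.factorial)) := by
            apply mul_le_mul (hM s hs') (ih s hs') (norm_nonneg _) hM0
        _ = (M * (‖(1:𝔸)‖ * (M ^ n / n.factorial))) * s ^ n := by ring
    have h3 : (∫ s in (0:ℝ)..t, (M * (‖(1:𝔸)‖ * (M ^ n / n.factorial))) * s ^ n)
        = (M * (‖(1:𝔸)‖ * (M ^ n / n.factorial))) * (t ^ (n+1) / (n+1)) := by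
      rw [intervalIntegral.integral_const_mul, integral_pow]
      ring
    calc ‖∫ s in (0:ℝ)..t, A s * chenI A n s‖
        ≤ (M * (‖(1:𝔸)‖ * (M ^ n / n.factorial))) * (t ^ (n+1) / (n+1)) := by
          rw [← h3]; exact h1.trans h2
      _ = ‖(1:𝔸)‖ * (M ^ (n+1) * t ^ (n+1) / (n+1).factorial) := by
          rw [Nat.factorial_succ]
          push_cast
          have hfac : (0:ℝ) < n.factorial := by positivity
          field_simp
          ring

/-- for a smooth `A`, the time-ordered exponential `Φ^A` is `C^∞` on `[0,1]`
(smoothness claim of Lemma 3.1 at a point base). -/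
theorem chenPhi_contDiffOn (A : ℝ → 𝔸) (hA : ContDiff ℝ (⊤ : ℕ∞) A) :
    ContDiffOn ℝ (⊤ : ℕ∞) (chenPhi A) (Icc 0 1) := by
  have hA0 : Continuous A := hA.continuous
  obtain ⟨M, hM⟩ : ∃ M, ∀ s ∈ Icc (0:ℝ) 1, ‖A s‖ ≤ M :=
    isCompact_Icc.exists_bound_of_continuousOn hA0.continuousOn
  have hM0 : 0 ≤ M := le_trans (norm_nonneg _) (hM 0 (by norm_num))
  set u : ℕ → ℝ := fun n => ‖(1:𝔸)‖ * (M ^ n / n.factorial) with hu_def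
  have hu : Summable u := (Real.summable_pow_div_factorial M).mul_left _
  -- uniform bound
  have hb : ∀ n, ∀ t ∈ Icc (0:ℝ) 1, ‖chenI A n t‖ ≤ u n := by
    intro n t ht
    refine (chenI_norm_le A hA0 hM0 hM n t ht).trans ?_
    have htn : t ^ n ≤ 1 := pow_le_one₀ ht.1 ht.2
    have : M ^ n * t ^ n / n.factorial ≤ M ^ n / n.factorial := by
      calc M ^ n * t ^ n / n.factorial ≤ M ^ n * 1 / n.factorial := by
            gcongr
        _ = M ^ n / n.factorial := by rw [mul_one]
    exact mul_le_mul_of_nonneg_left this (norm_nonneg _)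
  have hsum : ∀ t ∈ Icc (0:ℝ) 1, Summable fun n => chenI A n t := fun t ht =>
    Summable.of_norm_bounded hu (fun n => hb n t ht)
  -- continuity of Φ on [0,1]
  have hΦc : ContinuousOn (chenPhi A) (Icc 0 1) := by
    refine continuousOn_tsum (fun n => ((chenI_key A hA0 n).1).continuousOn) hu ?_
    intro n t ht; exact hb n t ht
  -- the integral equation
  have hkey : ∀ t ∈ Icc (0:ℝ) 1,
      chenPhi A t = 1 + ∫ s in (0:ℝ)..t, A s * chenPhi A s := by
    intro t ht
    have h0 : chenPhi A t = chenI A 0 t + ∑' n, chenI A (n+1) t :=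
      Summable.tsum_eq_zero_add (hsum t ht)
    have hI0 : chenI A 0 t = 1 := rfl
    have hrec : ∀ n, chenI A (n+1) t
        = ∫ s in Ioc (0:ℝ) t, A s * chenI A n s := by
      intro n
      rw [chenI_succ A hA0 n t, intervalIntegral.integral_of_le ht.1]
    have hg_int : ∀ n, IntegrableOn (fun s => A s * chenI A n s) (Ioc 0 t) := by
      intro n
      exact (hA0.mul (chenI_key A hA0 n).1).integrableOn_Ioc
    have hg_norm : ∀ n, (∫ s in Ioc (0:ℝ) t, ‖A s * chenI A n s‖) ≤ M * u n * t := by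
      intro n
      have : (∫ s in Ioc (0:ℝ) t, ‖A s * chenI A n s‖)
          ≤ ∫ _ in Ioc (0:ℝ) t, M * u n := by
        apply setIntegral_mono_on (hg_int n).norm (integrableOn_const
          (by simp [measure_lt_top])) measurableSet_Ioc
        intro s hs
        have hs' : s ∈ Icc (0:ℝ) 1 := ⟨hs.1.le, hs.2.trans ht.2⟩
        calc ‖A s * chenI A n s‖ ≤ ‖A s‖ * ‖chenI A n s‖ := norm_mul_le _ _
          _ ≤ M * u n := mul_le_mul (hM s hs') (hb n s hs') (norm_nonneg _) hM0
      refine this.trans ?_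
      rw [setIntegral_const]
      rw [measureReal_def, Real.volume_Ioc]
      rw [smul_eq_mul, ENNReal.toReal_ofReal (by linarith [ht.1])]
      ring_nf
      simp [mul_comm, mul_assoc, le_refl]
    have hswap : (∑' n, ∫ s in Ioc (0:ℝ) t, A s * chenI A n s)
        = ∫ s in Ioc (0:ℝ) t, ∑' n, A s * chenI A n s := by
      apply integral_tsum_of_summable_integral_norm hg_int
      apply Summable.of_nonneg_of_le
        (fun n => integral_nonneg fun s => norm_nonneg _)
        (fun n => hg_norm n)
      exact (hu.mul_left M).mul_right t
    have hcongr : (∫ s in Ioc (0:ℝ) t, ∑' n, A s * chenI A n s)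
        = ∫ s in Ioc (0:ℝ) t, A s * chenPhi A s := by
      apply setIntegral_congr_fun measurableSet_Ioc
      intro s hs
      have hs' : s ∈ Icc (0:ℝ) 1 := ⟨hs.1.le, hs.2.trans ht.2⟩
      exact (hsum s hs').tsum_mul_left (A s)
    rw [h0, hI0]
    congr 1
    rw [intervalIntegral.integral_of_le ht.1, ← hcongr, ← hswap]
    exact tsum_congr hrec
  -- derivative of Φ within [0,1]
  have hf' : ContinuousOn (fun s => A s * chenPhi A s) (Icc 0 1) :=
    hA0.continuousOn.mul hΦc
  have hInt : ∀ t ∈ Icc (0:ℝ) 1,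
      IntervalIntegrable (fun s => A s * chenPhi A s) volume 0 t := by
    intro t ht
    apply ContinuousOn.intervalIntegrable
    apply hf'.mono
    rw [uIcc_of_le ht.1]
    exact Icc_subset_Icc le_rfl ht.2
  have hderiv : ∀ t₀ ∈ Icc (0:ℝ) 1,
      HasDerivWithinAt (chenPhi A) (A t₀ * chenPhi A t₀) (Icc 0 1) t₀ := by
    intro t₀ ht₀
    haveI : Fact (t₀ ∈ Icc (0:ℝ) 1) := ⟨ht₀⟩
    have H : HasDerivWithinAt (fun u => ∫ s in (0:ℝ)..u, A s * chenPhi A s)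
        (A t₀ * chenPhi A t₀) (Icc 0 1) t₀ := by
      apply intervalIntegral.integral_hasDerivWithinAt_right (hInt t₀ ht₀)
        ⟨Icc 0 1, self_mem_nhdsWithin, hf'.aestronglyMeasurable measurableSet_Icc⟩
      exact hf' t₀ ht₀
    exact (H.const_add 1).congr (fun y hy => hkey y hy) (hkey t₀ ht₀)
  have hD : ∀ t ∈ Icc (0:ℝ) 1,
      derivWithin (chenPhi A) (Icc 0 1) t = A t * chenPhi A t := fun t ht =>
    (hderiv t ht).derivWithin ((uniqueDiffOn_Icc one_pos) t ht)
  have main : ∀ n : ℕ, ContDiffOn ℝ n (chenPhi A) (Icc 0 1) := by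
    intro n
    induction n with
    | zero => simpa [contDiffOn_zero] using hΦc
    | succ n ih =>
      have hcast : ((n + 1 : ℕ) : WithTop ℕ∞) = (n : WithTop ℕ∞) + 1 := by
        norm_cast
      rw [hcast]
      refine (contDiffOn_succ_iff_derivWithin (uniqueDiffOn_Icc one_pos)).2
        ⟨fun t ht => (hderiv t ht).differentiableWithinAt, ?_, ?_⟩
      · intro h
        exact absurd h (by exact_mod_cast (by simp : (n : WithTop ℕ∞) ≠ ⊤))
      · have : ContDiffOn ℝ n (fun t => A t * chenPhi A t) (Icc 0 1) :=
          ((hA.of_le (by exact_mod_cast le_top)).contDiffOn).mul ih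
        exact this.congr fun t ht => hD t ht
  exact contDiffOn_infty.2 main
end

section
/- Let 𝔸 be a Banach algebra over ℝ with unit, let A, B : [0,1] → 𝔸 be continuous, and let g : [0,1] → 𝔸 be differentiable on [0,1] (one-sidedly at the endpoints) with g(t) a unit of 𝔸 for every t ∈ [0,1]. Suppose A(t) = g(t)⁻¹·B(t)·g(t) − g(t)⁻¹·g′(t) for all t ∈ [0,1], and suppose Ψ : [0,1] → 𝔸 is differentiable on [0,1] with Ψ′(t) = B(t)·Ψ(t) for all t ∈ [0,1] and Ψ(0) = 1. Then the map y(t) = g(t)⁻¹·Ψ(t)·g(0) is differentiable on [0,1] and satisfies y′(t) = A(t)·y(t) for all t ∈ [0,1] and y(0) = 1. -/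
open MeasureTheory Set

variable {𝔸 : Type*} [NormedRing 𝔸] [NormedAlgebra ℝ 𝔸] [CompleteSpace 𝔸]

/-- the gauge transform `y(t) = g(t)⁻¹ · Ψ(t) · g(0)` of a solution `Ψ` of
`Ψ' = B·Ψ`, `Ψ(0) = 1` solves `y' = A·y`, `y(0) = 1`, where
`A = g⁻¹·B·g − g⁻¹·g'` (core computation of Proposition 3.3). -/
theorem gauge_transform_solves (A B : ℝ → 𝔸)
    (hA : ContinuousOn A (Icc 0 1)) (hB : ContinuousOn B (Icc 0 1))
    (g g' : ℝ → 𝔸)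
    (hg : ∀ t ∈ Icc (0:ℝ) 1, HasDerivWithinAt g (g' t) (Icc 0 1) t)
    (hunit : ∀ t ∈ Icc (0:ℝ) 1, IsUnit (g t))
    (hgauge : ∀ t ∈ Icc (0:ℝ) 1,
      A t = Ring.inverse (g t) * B t * g t - Ring.inverse (g t) * g' t)
    (Ψ : ℝ → 𝔸)
    (hΨ : ∀ t ∈ Icc (0:ℝ) 1, HasDerivWithinAt Ψ (B t * Ψ t) (Icc 0 1) t)
    (hΨ0 : Ψ 0 = 1) :
    (∀ t ∈ Icc (0:ℝ) 1,
      HasDerivWithinAt (fun u => Ring.inverse (g u) * Ψ u * g 0)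
        (A t * (Ring.inverse (g t) * Ψ t * g 0)) (Icc 0 1) t) ∧
    Ring.inverse (g 0) * Ψ 0 * g 0 = 1 := by
  constructor
  · intro t ht
    set I : ℝ → 𝔸 := fun u => Ring.inverse (g u) with hI
    obtain ⟨u, hu⟩ := hunit t ht
    have hinvcoe : I t = ↑u⁻¹ := by rw [hI]; simp [← hu]
    have hinv : HasDerivWithinAt I (-(I t * g' t * I t)) (Icc 0 1) t := by
      have hf : HasFDerivAt Ring.inverse
          (-(ContinuousLinearMap.mulLeftRight ℝ 𝔸 ↑u⁻¹) ↑u⁻¹) (g t) :=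
        hu ▸ hasFDerivAt_ringInverse (𝕜 := ℝ) u
      have := hf.comp_hasDerivWithinAt t (hg t ht)
      simpa [hI, ← hu, Function.comp_def] using this
    have hmul := (hinv.mul (hΨ t ht)).mul_const (g 0)
    have h1 : g t * I t = 1 := Ring.mul_inverse_cancel _ (hunit t ht)
    have key : (-(I t * g' t * I t) * Ψ t + I t * (B t * Ψ t)) * g 0
        = A t * (I t * Ψ t * g 0) := by
      rw [hgauge t ht]
      simp only [sub_mul, add_mul, neg_mul, mul_assoc]
      rw [show g t * (I t * (Ψ t * g 0)) = Ψ t * g 0 by rw [← mul_assoc, h1, one_mul]]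
      abel
    convert hmul using 1
    · simp only [hI]; rfl
    exact key.symm
  · rw [hΨ0, mul_one, Ring.inverse_mul_cancel _ (hunit 0 (by norm_num))]
end

section
/- Let 𝔸 be a Banach algebra over ℝ with unit, let A, B : [0,1] → 𝔸 be continuous, and let g : [0,1] → 𝔸 be differentiable on [0,1] (one-sidedly at the endpoints) with g(t) a unit of 𝔸 for every t ∈ [0,1]. If A(t) = g(t)⁻¹·B(t)·g(t) − g(t)⁻¹·g′(t) for all t ∈ [0,1], then Φ^A(t) = g(t)⁻¹·Φ^B(t)·g(0) for all t ∈ [0,1]. (Paper's Proposition 3.3, gauge invariance of iterated integrals, specialized to a point base.) -/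
open MeasureTheory Set
open scoped Nat

variable {𝔸 : Type*} [NormedRing 𝔸] [NormedAlgebra ℝ 𝔸] [CompleteSpace 𝔸]

namespace ChenGauge

variable {f : ℝ → 𝔸}

/-- Main structural lemma: continuity of `chenI` and linearity of `chenAux` in `x`. -/
lemma key (hf : Continuous f) (n : ℕ) :
    Continuous (chenI f n) ∧ ∀ x t, chenAux f n x t = x * chenI f n t := by
  induction n with
  | zero => exact ⟨continuous_const, fun x t => (mul_one x).symm⟩
  | succ n ih =>
    obtain ⟨hc, hx⟩ := ih
    have hG : Continuous fun s => f s * chenI f n s := hf.mul hc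
    have haux : ∀ x t, chenAux f (n+1) x t
        = x * ∫ s in (0:ℝ)..t, f s * chenI f n s := by
      intro x t
      show (∫ s in (0:ℝ)..t, chenAux f n (x * f s) s) = _
      have h1 : ∀ s, chenAux f n (x * f s) s
          = (ContinuousLinearMap.mul ℝ 𝔸 x) (f s * chenI f n s) := by
        intro s
        simp [hx, ContinuousLinearMap.mul_apply', mul_assoc]
      simp only [h1]
      exact (ContinuousLinearMap.mul ℝ 𝔸 x).intervalIntegral_comp_comm
        (hG.intervalIntegrable 0 t)
    have hI : chenI f (n+1) = fun t => ∫ s in (0:ℝ)..t, f s * chenI f n s := by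
      funext t
      rw [chenI, haux, one_mul]
    refine ⟨?_, ?_⟩
    · rw [hI]
      exact continuous_iff_continuousAt.2 fun t =>
        ((hG.integral_hasStrictDerivAt 0 t).hasDerivAt).continuousAt
    · intro x t
      rw [haux, hI]

lemma chenI_succ (hf : Continuous f) (n : ℕ) (t : ℝ) :
    chenI f (n+1) t = ∫ s in (0:ℝ)..t, f s * chenI f n s := by
  rw [chenI]
  show (∫ s in (0:ℝ)..t, chenAux f n (1 * f s) s) = _
  congr 1
  funext s
  rw [(key hf n).2, one_mul]

lemma chenI_bound (hf : Continuous f) {M : ℝ} (hM : ∀ s, ‖f s‖ ≤ M) (n : ℕ) :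
    ∀ t : ℝ, 0 ≤ t → ‖chenI f n t‖ ≤ ‖(1:𝔸)‖ * M ^ n * t ^ n / n ! := by
  have hM0 : 0 ≤ M := le_trans (norm_nonneg _) (hM 0)
  induction n with
  | zero => intro t _; simp [chenI, chenAux]
  | succ n ih =>
    intro t ht
    rw [chenI_succ hf]
    have hb : ∀ᵐ s ∂(volume.restrict (Set.uIoc (0:ℝ) t)),
        ‖f s * chenI f n s‖ ≤ (‖(1:𝔸)‖ * M ^ (n+1) / n !) * s ^ n := by
      refine Filter.eventually_of_mem (ae_restrict_mem measurableSet_uIoc) ?_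
      intro s hs
      rw [Set.uIoc_of_le ht] at hs
      calc ‖f s * chenI f n s‖ ≤ ‖f s‖ * ‖chenI f n s‖ := norm_mul_le _ _
        _ ≤ M * (‖(1:𝔸)‖ * M ^ n * s ^ n / n !) := by
            apply mul_le_mul (hM s) (ih s hs.1.le) (norm_nonneg _) hM0
        _ = (‖(1:𝔸)‖ * M ^ (n+1) / n !) * s ^ n := by ring
    have hintb : IntervalIntegrable
        (fun s => (‖(1:𝔸)‖ * M ^ (n+1) / n !) * s ^ n) volume 0 t :=
      (continuous_const.mul (continuous_pow n)).intervalIntegrable 0 t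
    calc ‖∫ s in (0:ℝ)..t, f s * chenI f n s‖
        ≤ |∫ s in (0:ℝ)..t, (‖(1:𝔸)‖ * M ^ (n+1) / n !) * s ^ n| :=
          intervalIntegral.norm_integral_le_abs_of_norm_le hb hintb
      _ = ‖(1:𝔸)‖ * M ^ (n+1) * t ^ (n+1) / (n+1)! := by
          rw [intervalIntegral.integral_const_mul, integral_pow,
            zero_pow (Nat.succ_ne_zero n), sub_zero, abs_of_nonneg (by positivity),
            Nat.factorial_succ]
          push_cast
          rw [div_mul_div_comm, mul_comm ((n ! : ℝ)) ((n:ℝ) + 1)]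

lemma chenI_bound' (hf : Continuous f) {M : ℝ} (hM : ∀ s, ‖f s‖ ≤ M) (n : ℕ)
    {t : ℝ} (ht : t ∈ Icc (0:ℝ) 1) :
    ‖chenI f n t‖ ≤ ‖(1:𝔸)‖ * (M ^ n / n !) := by
  have hM0 : 0 ≤ M := le_trans (norm_nonneg _) (hM 0)
  calc ‖chenI f n t‖ ≤ ‖(1:𝔸)‖ * M ^ n * t ^ n / n ! := chenI_bound hf hM n t ht.1
    _ ≤ ‖(1:𝔸)‖ * M ^ n * 1 / n ! := by
        gcongr
        exact pow_le_one₀ ht.1 ht.2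
    _ = ‖(1:𝔸)‖ * (M ^ n / n !) := by ring

lemma summable_chenI (hf : Continuous f) {M : ℝ} (hM : ∀ s, ‖f s‖ ≤ M)
    {t : ℝ} (ht : t ∈ Icc (0:ℝ) 1) : Summable fun n => chenI f n t := by
  apply Summable.of_norm_bounded (((Real.summable_pow_div_factorial M)).mul_left ‖(1:𝔸)‖)
  intro n
  exact chenI_bound' hf hM n ht

lemma phi_continuousOn (hf : Continuous f) {M : ℝ} (hM : ∀ s, ‖f s‖ ≤ M) :
    ContinuousOn (chenPhi f) (Icc (0:ℝ) 1) := by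
  have h := tendstoUniformlyOn_tsum (f := fun n t => chenI f n t)
    (((Real.summable_pow_div_factorial M)).mul_left ‖(1:𝔸)‖)
    (s := Icc (0:ℝ) 1) (fun n x hx => chenI_bound' hf hM n hx)
  have : ContinuousOn (fun x => ∑' n, chenI f n x) (Icc (0:ℝ) 1) := by
    apply h.continuousOn
    exact (Filter.Eventually.of_forall fun s =>
      (continuous_finset_sum s fun n _ => (key hf n).1).continuousOn).frequently
  exact this

lemma phi_int_eq (hf : Continuous f) {M : ℝ} (hM : ∀ s, ‖f s‖ ≤ M)
    {t : ℝ} (ht : t ∈ Icc (0:ℝ) 1) :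
    chenPhi f t = 1 + ∫ s in (0:ℝ)..t, f s * chenPhi f s := by
  have hM0 : 0 ≤ M := le_trans (norm_nonneg _) (hM 0)
  have hFint : ∀ n : ℕ, Integrable (fun s => f s * chenI f n s)
      (volume.restrict (Ioc (0:ℝ) t)) :=
    fun n => (hf.mul (key hf n).1).integrableOn_Ioc
  have hnorm : ∀ n : ℕ, (∫ s in Ioc (0:ℝ) t, ‖f s * chenI f n s‖)
      ≤ (M * ‖(1:𝔸)‖) * (M ^ n / n !) := by
    intro n
    have hb : ∀ s ∈ Ioc (0:ℝ) t, ‖(fun u => ‖f u * chenI f n u‖) s‖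
        ≤ M * (‖(1:𝔸)‖ * (M ^ n / n !)) := by
      intro s hs
      have hs1 : s ∈ Icc (0:ℝ) 1 := ⟨hs.1.le, hs.2.trans ht.2⟩
      rw [Real.norm_eq_abs, abs_of_nonneg (norm_nonneg _)]
      calc ‖f s * chenI f n s‖ ≤ ‖f s‖ * ‖chenI f n s‖ := norm_mul_le _ _
        _ ≤ M * (‖(1:𝔸)‖ * (M ^ n / n !)) :=
            mul_le_mul (hM s) (chenI_bound' hf hM n hs1) (norm_nonneg _) hM0
    calc (∫ s in Ioc (0:ℝ) t, ‖f s * chenI f n s‖)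
        ≤ ‖∫ s in Ioc (0:ℝ) t, ‖f s * chenI f n s‖‖ := le_abs_self _
      _ ≤ M * (‖(1:𝔸)‖ * (M ^ n / n !)) * (volume (Ioc (0:ℝ) t)).toReal :=
          norm_setIntegral_le_of_norm_le_const (by simp [Real.volume_Ioc]) hb
      _ ≤ M * (‖(1:𝔸)‖ * (M ^ n / n !)) * 1 := by
          have hvol : (volume (Ioc (0:ℝ) t)).toReal ≤ 1 := by
            rw [Real.volume_Ioc]
            rcases le_or_gt t 0 with h | h
            · simp [ENNReal.ofReal_of_nonpos (by linarith)]
            · rw [ENNReal.toReal_ofReal (by linarith)]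
              linarith [ht.2]
          have hc : (0:ℝ) ≤ M * (‖(1:𝔸)‖ * (M ^ n / n !)) := by positivity
          exact mul_le_mul_of_nonneg_left hvol hc
      _ = (M * ‖(1:𝔸)‖) * (M ^ n / n !) := by ring
  have hsumnorm : Summable fun n : ℕ => ∫ s in Ioc (0:ℝ) t, ‖f s * chenI f n s‖ := by
    apply Summable.of_nonneg_of_le (fun n => integral_nonneg fun s => norm_nonneg _) hnorm
    exact ((Real.summable_pow_div_factorial M)).mul_left (M * ‖(1:𝔸)‖)
  have hswap := MeasureTheory.hasSum_integral_of_summable_integral_norm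
    (μ := volume.restrict (Ioc (0:ℝ) t)) hFint hsumnorm
  have heq1 : ∀ n : ℕ, (∫ s in Ioc (0:ℝ) t, f s * chenI f n s) = chenI f (n+1) t := by
    intro n
    rw [chenI_succ hf, intervalIntegral.integral_of_le ht.1]
  have heq2 : (∫ s in Ioc (0:ℝ) t, ∑' n, f s * chenI f n s)
      = ∫ s in (0:ℝ)..t, f s * chenPhi f s := by
    rw [intervalIntegral.integral_of_le ht.1]
    apply setIntegral_congr_fun measurableSet_Ioc
    intro s hs
    have hs1 : s ∈ Icc (0:ℝ) 1 := ⟨hs.1.le, hs.2.trans ht.2⟩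
    show (∑' n, f s * chenI f n s) = f s * chenPhi f s
    exact ((ContinuousLinearMap.mul ℝ 𝔸 (f s)).map_tsum (summable_chenI hf hM hs1)).symm
  simp only [heq1, heq2] at hswap
  have h3 := hswap.tsum_eq
  show (∑' n, chenI f n t) = _
  rw [Summable.tsum_eq_zero_add (summable_chenI hf hM ht), h3]
  rfl

lemma phi_hasDerivWithinAt (hf : Continuous f) {M : ℝ} (hM : ∀ s, ‖f s‖ ≤ M)
    {t : ℝ} (ht : t ∈ Ico (0:ℝ) 1) :
    HasDerivWithinAt (chenPhi f) (f t * chenPhi f t) (Ici t) t := by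
  have hGc : ContinuousOn (fun s => f s * chenPhi f s) (Icc (0:ℝ) 1) :=
    hf.continuousOn.mul (phi_continuousOn hf hM)
  have hmem : Icc (0:ℝ) 1 ∈ nhdsWithin t (Ici t) := Icc_mem_nhdsGE_of_mem ht
  have hmem' : Icc (0:ℝ) 1 ∈ nhdsWithin t (Ioi t) := Icc_mem_nhdsGT_of_mem ht
  have hint : IntervalIntegrable (fun s => f s * chenPhi f s) volume 0 t := by
    apply ContinuousOn.intervalIntegrable (hGc.mono ?_)
    rw [uIcc_of_le ht.1]
    exact Icc_subset_Icc le_rfl ht.2.le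
  have hmeas : StronglyMeasurableAtFilter (fun s => f s * chenPhi f s)
      (nhdsWithin t (Ioi t)) volume :=
    ⟨Icc 0 1, hmem', hGc.aestronglyMeasurable measurableSet_Icc⟩
  have hcw : ContinuousWithinAt (fun s => f s * chenPhi f s) (Ioi t) t :=
    (hGc t ⟨ht.1, ht.2.le⟩).mono_of_mem_nhdsWithin hmem'
  have H := intervalIntegral.integral_hasDerivWithinAt_right (s := Ici t) hint hmeas hcw
  have H1 := H.const_add (1:𝔸)
  refine H1.congr_of_eventuallyEq ?_ ?_
  · filter_upwards [hmem] with u hu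
    exact phi_int_eq hf hM hu
  · exact phi_int_eq hf hM ⟨ht.1, ht.2.le⟩

lemma chenAux_congr {f₁ f₂ : ℝ → 𝔸} (h : EqOn f₁ f₂ (Icc 0 1)) (n : ℕ) :
    ∀ x, ∀ t ∈ Icc (0:ℝ) 1, chenAux f₁ n x t = chenAux f₂ n x t := by
  induction n with
  | zero => intros; rfl
  | succ n ih =>
    intro x t ht
    show (∫ s in (0:ℝ)..t, chenAux f₁ n (x * f₁ s) s)
        = ∫ s in (0:ℝ)..t, chenAux f₂ n (x * f₂ s) s
    apply intervalIntegral.integral_congr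
    intro s hs
    rw [uIcc_of_le ht.1] at hs
    have hs1 : s ∈ Icc (0:ℝ) 1 := ⟨hs.1, hs.2.trans ht.2⟩
    show chenAux f₁ n (x * f₁ s) s = chenAux f₂ n (x * f₂ s) s
    rw [h hs1, ih _ s hs1]

lemma chenPhi_congr {f₁ f₂ : ℝ → 𝔸} (h : EqOn f₁ f₂ (Icc 0 1))
    {t : ℝ} (ht : t ∈ Icc (0:ℝ) 1) : chenPhi f₁ t = chenPhi f₂ t := by
  show (∑' n, chenI f₁ n t) = ∑' n, chenI f₂ n t
  exact tsum_congr fun n => chenAux_congr h n 1 t ht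

lemma chenPhi_zero (hf : Continuous f) : chenPhi f 0 = 1 := by
  rw [chenPhi]
  rw [tsum_eq_single 0]
  · rfl
  · intro n hn
    obtain ⟨m, rfl⟩ := Nat.exists_eq_succ_of_ne_zero hn
    rw [chenI_succ hf, intervalIntegral.integral_same]

end ChenGauge

open ChenGauge

/-- gauge invariance of iterated integrals (Proposition 3.3 at a point base):
if `A = g⁻¹·B·g − g⁻¹·g'` then `Φ^A(t) = g(t)⁻¹ · Φ^B(t) · g(0)`. -/
theorem chenPhi_gauge_invariance (A B : ℝ → 𝔸)
    (hA : ContinuousOn A (Icc 0 1)) (hB : ContinuousOn B (Icc 0 1))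
    (g g' : ℝ → 𝔸)
    (hg : ∀ t ∈ Icc (0:ℝ) 1, HasDerivWithinAt g (g' t) (Icc 0 1) t)
    (hunit : ∀ t ∈ Icc (0:ℝ) 1, IsUnit (g t))
    (hgauge : ∀ t ∈ Icc (0:ℝ) 1,
      A t = Ring.inverse (g t) * B t * g t - Ring.inverse (g t) * g' t) :
    ∀ t ∈ Icc (0:ℝ) 1, chenPhi A t = Ring.inverse (g t) * chenPhi B t * g 0 := by
  -- continuous extensions
  set Af : ℝ → 𝔸 := IccExtend zero_le_one ((Icc (0:ℝ) 1).restrict A) with hAfdef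
  set Bf : ℝ → 𝔸 := IccExtend zero_le_one ((Icc (0:ℝ) 1).restrict B) with hBfdef
  have hAfc : Continuous Af := hA.restrict.Icc_extend'
  have hBfc : Continuous Bf := hB.restrict.Icc_extend'
  have hAeq : EqOn Af A (Icc (0:ℝ) 1) := fun s hs => IccExtend_of_mem _ _ hs
  have hBeq : EqOn Bf B (Icc (0:ℝ) 1) := fun s hs => IccExtend_of_mem _ _ hs
  -- bounds
  obtain ⟨MA, hMA⟩ := isCompact_Icc.exists_bound_of_continuousOn hA
  obtain ⟨MB, hMB⟩ := isCompact_Icc.exists_bound_of_continuousOn hB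
  have hMAf : ∀ s, ‖Af s‖ ≤ MA := fun s =>
    hMA ((projIcc 0 1 zero_le_one s : Icc (0:ℝ) 1) : ℝ) (projIcc 0 1 zero_le_one s).2
  have hMBf : ∀ s, ‖Bf s‖ ≤ MB := fun s =>
    hMB ((projIcc 0 1 zero_le_one s : Icc (0:ℝ) 1) : ℝ) (projIcc 0 1 zero_le_one s).2
  have hMA0 : 0 ≤ MA := le_trans (norm_nonneg _) (hMAf 0)
  -- the candidate solution
  set Ψ : ℝ → 𝔸 := fun u => Ring.inverse (g u) * chenPhi Bf u * g 0 with hΨdef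
  -- Lipschitz vector field
  have hlip : ∀ s : ℝ, LipschitzWith (Real.toNNReal MA) (fun x : 𝔸 => Af s * x) := by
    intro s
    apply LipschitzWith.of_dist_le_mul
    intro x y
    rw [dist_eq_norm, dist_eq_norm, ← mul_sub]
    calc ‖Af s * (x - y)‖ ≤ ‖Af s‖ * ‖x - y‖ := norm_mul_le _ _
      _ ≤ MA * ‖x - y‖ := by gcongr; exact hMAf s
      _ = (Real.toNNReal MA : ℝ) * ‖x - y‖ := by rw [Real.coe_toNNReal _ hMA0]
  -- continuity of both solutions
  have hPhiAc : ContinuousOn (chenPhi Af) (Icc (0:ℝ) 1) := phi_continuousOn hAfc hMAf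
  have hPhiBc : ContinuousOn (chenPhi Bf) (Icc (0:ℝ) 1) := phi_continuousOn hBfc hMBf
  have hginvc : ContinuousOn (fun u => Ring.inverse (g u)) (Icc (0:ℝ) 1) := by
    intro s hs
    have hu := (hunit s hs).unit_spec
    have h1 : ContinuousAt Ring.inverse (g s) := by
      rw [← hu]
      exact (hasFDerivAt_ringInverse (𝕜 := ℝ) (hunit s hs).unit).continuousAt
    exact h1.comp_continuousWithinAt (hg s hs).continuousWithinAt
  have hΨc : ContinuousOn Ψ (Icc (0:ℝ) 1) :=
    (hginvc.mul hPhiBc).mul continuousOn_const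
  -- derivative of chenPhi Af
  have hPhiA' : ∀ s ∈ Ico (0:ℝ) 1,
      HasDerivWithinAt (chenPhi Af) (Af s * chenPhi Af s) (Ici s) s :=
    fun s hs => phi_hasDerivWithinAt hAfc hMAf hs
  -- derivative of Ψ
  have hΨ' : ∀ s ∈ Ico (0:ℝ) 1, HasDerivWithinAt Ψ (Af s * Ψ s) (Ici s) s := by
    intro s hs
    have hsIcc : s ∈ Icc (0:ℝ) 1 := ⟨hs.1, hs.2.le⟩
    have hgd : HasDerivWithinAt g (g' s) (Ici s) s :=
      (hg s hsIcc).mono_of_mem_nhdsWithin (Icc_mem_nhdsGE_of_mem hs)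
    set i : 𝔸 := Ring.inverse (g s) with hidef
    have hi1 : i * g s = 1 := Ring.inverse_mul_cancel _ (hunit s hsIcc)
    have hi2 : g s * i = 1 := Ring.mul_inverse_cancel _ (hunit s hsIcc)
    have hinv : HasDerivWithinAt (fun u => Ring.inverse (g u))
        (-(i * g' s * i)) (Ici s) s := by
      obtain ⟨u, hu2⟩ := hunit s hsIcc
      have hiu : i = (↑u⁻¹ : 𝔸) := by
        rw [hidef, ← hu2, Ring.inverse_unit]
      have hF : HasFDerivAt (Ring.inverse : 𝔸 → 𝔸)
          (-(ContinuousLinearMap.mulLeftRight ℝ 𝔸 i i)) (g s) := by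
        rw [hiu, ← hu2]
        exact hasFDerivAt_ringInverse (𝕜 := ℝ) u
      have h2 := hF.comp_hasDerivWithinAt s hgd
      have h2' : HasDerivWithinAt (fun u => Ring.inverse (g u))
          ((-(ContinuousLinearMap.mulLeftRight ℝ 𝔸 i i)) (g' s)) (Ici s) s := h2
      convert h2' using 1
      simp
    have hPhiB' : HasDerivWithinAt (chenPhi Bf) (Bf s * chenPhi Bf s) (Ici s) s :=
      phi_hasDerivWithinAt hBfc hMBf hs
    have hprod := (hinv.mul hPhiB').mul_const (g 0)
    have hAs : Af s = i * B s * g s - i * g' s := by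
      rw [hAeq hsIcc, hgauge s hsIcc, hidef]
    have hBs : Bf s = B s := hBeq hsIcc
    convert hprod using 1
    · rfl
    rw [hΨdef, hAs, hBs]
    simp only [neg_mul, sub_mul, add_mul, ← mul_assoc]
    rw [mul_assoc (i * B s) (g s) i, hi2, mul_one]
    rw [sub_eq_add_neg, add_comm]
  -- initial condition
  have h0Icc : (0:ℝ) ∈ Icc (0:ℝ) 1 := ⟨le_rfl, zero_le_one⟩
  have h0 : chenPhi Af 0 = Ψ 0 := by
    show chenPhi Af 0 = Ring.inverse (g 0) * chenPhi Bf 0 * g 0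
    rw [chenPhi_zero hAfc, chenPhi_zero hBfc, mul_one,
      Ring.inverse_mul_cancel _ (hunit 0 h0Icc)]
  -- uniqueness
  have huniq := ODE_solution_unique hlip hPhiAc hPhiA' hΨc hΨ' h0
  intro t ht
  have h1 : chenPhi A t = chenPhi Af t := chenPhi_congr hAeq.symm ht
  have h2 : chenPhi B t = chenPhi Bf t := chenPhi_congr hBeq.symm ht
  rw [h1, h2, huniq ht]
end

section
/- Let V and W be Banach spaces over ℝ, let A : [0,1] → L(V,V) and B : [0,1] → L(W,W) be continuous maps into the Banach algebras of continuous linear endomorphisms, and let g : [0,1] → L(V,W) be differentiable on [0,1] (one-sidedly at the endpoints) such that g(t) is an invertible continuous linear map (a continuous linear equivalence V ≅ W) for every t ∈ [0,1]. Suppose A(t) = g(t)⁻¹ ∘ B(t) ∘ g(t) − g(t)⁻¹ ∘ g′(t) for all t ∈ [0,1]. Then Φ^A(t) = g(t)⁻¹ ∘ Φ^B(t) ∘ g(0) for all t ∈ [0,1], where Φ^A and Φ^B are the iterated-integral series formed in L(V,V) and L(W,W) respectively. (The transition-isomorphism compatibility of the paper's Lemma 4.2, specialized to a point base.) -/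
open MeasureTheory Set

set_option linter.unusedSectionVars false
set_option maxHeartbeats 1000000

variable {𝔸 : Type*} [NormedRing 𝔸] [NormedAlgebra ℝ 𝔸] [CompleteSpace 𝔸]

namespace ChenProofAux

variable {A : ℝ → 𝔸}

lemma uIcc_sub {t : ℝ} (ht : t ∈ Icc (0:ℝ) 1) : uIcc (0:ℝ) t ⊆ Icc 0 1 := by
  rw [uIcc_of_le ht.1]
  exact Icc_subset_Icc le_rfl ht.2

lemma chen_main (hA : ContinuousOn A (Icc 0 1)) (n : ℕ) :
    ContinuousOn (chenI A n) (Icc 0 1) ∧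
      ∀ t ∈ Icc (0:ℝ) 1, ∀ x : 𝔸, chenAux A n x t = x * chenI A n t := by
  induction n with
  | zero =>
    refine ⟨continuousOn_const, fun t ht x => ?_⟩
    simp [chenAux, chenI]
  | succ n ih =>
    obtain ⟨ihc, ihm⟩ := ih
    have hcont : ContinuousOn (fun s => A s * chenI A n s) (Icc 0 1) := hA.mul ihc
    have key : ∀ t ∈ Icc (0:ℝ) 1, ∀ x : 𝔸,
        chenAux A (n + 1) x t = x * ∫ s in (0:ℝ)..t, A s * chenI A n s := by
      intro t ht x
      have hint : IntervalIntegrable (fun s => A s * chenI A n s) volume 0 t :=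
        (hcont.mono (uIcc_sub ht)).intervalIntegrable
      have h1 : EqOn (fun s => chenAux A n (x * A s) s)
          (fun s => x * (A s * chenI A n s)) (uIcc 0 t) := fun s hs => by
        simp only
        rw [ihm s (uIcc_sub ht hs) (x * A s), mul_assoc]
      show (∫ s in (0:ℝ)..t, chenAux A n (x * A s) s) = _
      rw [intervalIntegral.integral_congr h1]
      have := (ContinuousLinearMap.mul ℝ 𝔸 x).intervalIntegral_comp_comm hint
      simpa using this
    refine ⟨?_, fun t ht x => by
      rw [key t ht x, chenI, key t ht 1, one_mul]⟩
    have hI : IntegrableOn (fun s => A s * chenI A n s) (uIcc (0:ℝ) 1) volume := by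
      rw [uIcc_of_le zero_le_one]
      exact hcont.integrableOn_Icc
    have hprim := intervalIntegral.continuousOn_primitive_interval hI
    rw [uIcc_of_le zero_le_one] at hprim
    exact hprim.congr fun t ht => by rw [chenI, key t ht 1, one_mul]

lemma chenI_succ (hA : ContinuousOn A (Icc 0 1)) (n : ℕ) {t : ℝ} (ht : t ∈ Icc (0:ℝ) 1) :
    chenI A (n + 1) t = ∫ s in (0:ℝ)..t, A s * chenI A n s := by
  show (∫ s in (0:ℝ)..t, chenAux A n (1 * A s) s) = _
  refine intervalIntegral.integral_congr fun s hs => ?_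
  rw [one_mul, (chen_main hA n).2 s (uIcc_sub ht hs) (A s)]

lemma chenI_norm_le (hA : ContinuousOn A (Icc 0 1)) {C : ℝ} (hC0 : 0 ≤ C)
    (hC : ∀ s ∈ Icc (0:ℝ) 1, ‖A s‖ ≤ C) (n : ℕ) :
    ∀ t ∈ Icc (0:ℝ) 1, ‖chenI A n t‖ ≤ ‖(1:𝔸)‖ * (C ^ n * t ^ n / n.factorial) := by
  induction n with
  | zero => intro t ht; simp [chenI, chenAux]
  | succ n ih =>
    intro t ht
    have hIcc : Icc (0:ℝ) t ⊆ Icc 0 1 := Icc_subset_Icc le_rfl ht.2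
    have hcont : ContinuousOn (fun s => A s * chenI A n s) (Icc 0 1) :=
      hA.mul (chen_main hA n).1
    have hi1 : IntervalIntegrable (fun s => ‖A s * chenI A n s‖) volume 0 t :=
      ((hcont.mono (uIcc_sub ht)).norm).intervalIntegrable
    have hi2 : IntervalIntegrable
        (fun s => (C * (‖(1:𝔸)‖ * (C ^ n / n.factorial))) * s ^ n) volume 0 t :=
      (Continuous.intervalIntegrable (by continuity) 0 t)
    have h2 : (∫ s in (0:ℝ)..t, ‖A s * chenI A n s‖)
        ≤ ∫ s in (0:ℝ)..t, (C * (‖(1:𝔸)‖ * (C ^ n / n.factorial))) * s ^ n := by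
      refine intervalIntegral.integral_mono_on ht.1 hi1 hi2 fun s hs => ?_
      have hs1 : s ∈ Icc (0:ℝ) 1 := hIcc hs
      calc ‖A s * chenI A n s‖ ≤ ‖A s‖ * ‖chenI A n s‖ := norm_mul_le _ _
        _ ≤ C * (‖(1:𝔸)‖ * (C ^ n * s ^ n / n.factorial)) :=
            mul_le_mul (hC s hs1) (ih s hs1) (norm_nonneg _) hC0
        _ = (C * (‖(1:𝔸)‖ * (C ^ n / n.factorial))) * s ^ n := by ring
    have h3 : (∫ s in (0:ℝ)..t, (C * (‖(1:𝔸)‖ * (C ^ n / n.factorial))) * s ^ n)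
        = (C * (‖(1:𝔸)‖ * (C ^ n / n.factorial))) * (t ^ (n + 1) / (n + 1)) := by
      rw [intervalIntegral.integral_const_mul, integral_pow]
      ring
    have hfac : ((n:ℝ) + 1) ≠ 0 := by positivity
    have hfac2 : (n.factorial : ℝ) ≠ 0 := by
      exact_mod_cast Nat.factorial_ne_zero n
    calc ‖chenI A (n + 1) t‖
        = ‖∫ s in (0:ℝ)..t, A s * chenI A n s‖ := by rw [chenI_succ hA n ht]
      _ ≤ ∫ s in (0:ℝ)..t, ‖A s * chenI A n s‖ :=
          intervalIntegral.norm_integral_le_integral_norm ht.1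
      _ ≤ (C * (‖(1:𝔸)‖ * (C ^ n / n.factorial))) * (t ^ (n + 1) / (n + 1)) := by
          rw [← h3]; exact h2
      _ = ‖(1:𝔸)‖ * (C ^ (n + 1) * t ^ (n + 1) / (n + 1).factorial) := by
          rw [Nat.factorial_succ]
          push_cast
          field_simp
          ring

lemma pow_term_le {C t : ℝ} (hC0 : 0 ≤ C) (ht : t ∈ Icc (0:ℝ) 1) (n : ℕ) :
    ‖(1:𝔸)‖ * (C ^ n * t ^ n / n.factorial) ≤ ‖(1:𝔸)‖ * (C ^ n / n.factorial) := by
  have h1 : C ^ n * t ^ n ≤ C ^ n := by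
    calc C ^ n * t ^ n ≤ C ^ n * 1 :=
          mul_le_mul_of_nonneg_left (pow_le_one₀ ht.1 ht.2) (by positivity)
      _ = C ^ n := mul_one _
  gcongr

lemma chenPhi_summable (hA : ContinuousOn A (Icc 0 1)) {C : ℝ} (hC0 : 0 ≤ C)
    (hC : ∀ s ∈ Icc (0:ℝ) 1, ‖A s‖ ≤ C) {t : ℝ} (ht : t ∈ Icc (0:ℝ) 1) :
    Summable fun n => chenI A n t := by
  refine Summable.of_norm (Summable.of_nonneg_of_le (fun n => norm_nonneg _)
    (fun n => ?_) (((Real.summable_pow_div_factorial C).mul_left ‖(1:𝔸)‖)))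
  exact (chenI_norm_le hA hC0 hC n t ht).trans (pow_term_le hC0 ht n)

lemma chenPhi_continuousOn (hA : ContinuousOn A (Icc 0 1)) {C : ℝ} (hC0 : 0 ≤ C)
    (hC : ∀ s ∈ Icc (0:ℝ) 1, ‖A s‖ ≤ C) :
    ContinuousOn (chenPhi A) (Icc 0 1) := by
  refine continuousOn_tsum (fun n => (chen_main hA n).1)
    ((Real.summable_pow_div_factorial C).mul_left ‖(1:𝔸)‖) (fun n x hx => ?_)
  exact (chenI_norm_le hA hC0 hC n x hx).trans (pow_term_le hC0 hx n)

lemma chenPhi_zero (A : ℝ → 𝔸) : chenPhi A 0 = 1 := by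
  have h : ∀ n, chenI A n (0:ℝ) = if n = 0 then 1 else 0 := by
    intro n
    cases n with
    | zero => simp [chenI, chenAux]
    | succ n => simp [chenI, chenAux, intervalIntegral.integral_same]
  rw [chenPhi, tsum_eq_single 0 (fun n hn => by rw [h n, if_neg hn])]
  simp [h]

lemma chenPhi_integral_eq (hA : ContinuousOn A (Icc 0 1)) {C : ℝ} (hC0 : 0 ≤ C)
    (hC : ∀ s ∈ Icc (0:ℝ) 1, ‖A s‖ ≤ C) {t : ℝ} (ht : t ∈ Icc (0:ℝ) 1) :
    chenPhi A t = 1 + ∫ s in (0:ℝ)..t, A s * chenPhi A s := by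
  set μ : Measure ℝ := volume.restrict (Ioc (0:ℝ) t) with hμ
  have hIoc : Ioc (0:ℝ) t ⊆ Icc 0 1 := fun s hs => ⟨hs.1.le, hs.2.trans ht.2⟩
  have hF_int : ∀ n : ℕ, Integrable (fun s => A s * chenI A n s) μ := by
    intro n
    have h1 : IntegrableOn (fun s => A s * chenI A n s) (Icc 0 t) volume :=
      ((hA.mul (chen_main hA n).1).mono (Icc_subset_Icc le_rfl ht.2)).integrableOn_Icc
    exact h1.mono_set Ioc_subset_Icc_self
  have hnorm_int : ∀ n : ℕ, (∫ s, ‖A s * chenI A n s‖ ∂μ)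
      ≤ C * (‖(1:𝔸)‖ * (C ^ n / n.factorial)) := by
    intro n
    have hDnn : (0:ℝ) ≤ C * (‖(1:𝔸)‖ * (C ^ n / n.factorial)) := by positivity
    have hb : ∀ s ∈ Ioc (0:ℝ) t, ‖A s * chenI A n s‖
        ≤ C * (‖(1:𝔸)‖ * (C ^ n / n.factorial)) := by
      intro s hs
      have hs1 : s ∈ Icc (0:ℝ) 1 := hIoc hs
      calc ‖A s * chenI A n s‖ ≤ ‖A s‖ * ‖chenI A n s‖ := norm_mul_le _ _
        _ ≤ C * (‖(1:𝔸)‖ * (C ^ n * s ^ n / n.factorial)) :=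
            mul_le_mul (hC s hs1) (chenI_norm_le hA hC0 hC n s hs1) (norm_nonneg _) hC0
        _ ≤ C * (‖(1:𝔸)‖ * (C ^ n / n.factorial)) :=
            mul_le_mul_of_nonneg_left (pow_term_le hC0 hs1 n) hC0
    calc (∫ s, ‖A s * chenI A n s‖ ∂μ)
        ≤ ∫ _s, C * (‖(1:𝔸)‖ * (C ^ n / n.factorial)) ∂μ := by
          refine integral_mono_ae ((hF_int n).norm) (integrable_const _) ?_
          rw [hμ]
          exact (ae_restrict_iff' measurableSet_Ioc).2 (Filter.Eventually.of_forall hb)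
      _ = (μ univ).toReal * (C * (‖(1:𝔸)‖ * (C ^ n / n.factorial))) := by
          rw [integral_const]; simp [measureReal_def]
      _ ≤ 1 * (C * (‖(1:𝔸)‖ * (C ^ n / n.factorial))) := by
          refine mul_le_mul_of_nonneg_right ?_ hDnn
          rw [hμ]
          simp only [Measure.restrict_apply_univ, Real.volume_Ioc]
          rw [ENNReal.toReal_ofReal (by linarith [ht.1])]
          linarith [ht.2]
      _ = C * (‖(1:𝔸)‖ * (C ^ n / n.factorial)) := one_mul _
  have hF_sum : Summable fun n : ℕ => ∫ s, ‖A s * chenI A n s‖ ∂μ := by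
    refine Summable.of_nonneg_of_le (fun n => integral_nonneg fun s => norm_nonneg _)
      hnorm_int ?_
    exact ((Real.summable_pow_div_factorial C).mul_left ‖(1:𝔸)‖).mul_left C
  have hkey := MeasureTheory.hasSum_integral_of_summable_integral_norm hF_int hF_sum
  have h1 : ∀ n : ℕ, (∫ s, A s * chenI A n s ∂μ) = chenI A (n + 1) t := by
    intro n
    rw [chenI_succ hA n ht, intervalIntegral.integral_of_le ht.1]
  have h2 : (∫ s, (∑' n, A s * chenI A n s) ∂μ) = ∫ s in (0:ℝ)..t, A s * chenPhi A s := by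
    rw [intervalIntegral.integral_of_le ht.1]
    refine setIntegral_congr_fun measurableSet_Ioc fun s hs => ?_
    exact (chenPhi_summable hA hC0 hC (hIoc hs)).tsum_mul_left (A s)
  simp only [h1] at hkey
  rw [h2] at hkey
  have h3 : chenPhi A t = chenI A 0 t + ∑' n, chenI A (n + 1) t := by
    rw [chenPhi]
    exact Summable.tsum_eq_zero_add (chenPhi_summable hA hC0 hC ht)
  rw [h3, hkey.tsum_eq]
  simp [chenI, chenAux]

lemma chenPhi_hasDerivAt (hA : ContinuousOn A (Icc 0 1)) {C : ℝ} (hC0 : 0 ≤ C)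
    (hC : ∀ s ∈ Icc (0:ℝ) 1, ‖A s‖ ≤ C) {x : ℝ} (hx : x ∈ Ioo (0:ℝ) 1) :
    HasDerivAt (chenPhi A) (A x * chenPhi A x) x := by
  have hmem : Icc (0:ℝ) 1 ∈ nhds x := Icc_mem_nhds hx.1 hx.2
  have hxI : x ∈ Icc (0:ℝ) 1 := ⟨hx.1.le, hx.2.le⟩
  have hcont : ContinuousOn (fun s => A s * chenPhi A s) (Icc 0 1) :=
    hA.mul (chenPhi_continuousOn hA hC0 hC)
  have hint : IntervalIntegrable (fun s => A s * chenPhi A s) volume 0 x :=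
    (hcont.mono (uIcc_sub hxI)).intervalIntegrable
  have hmeas : StronglyMeasurableAtFilter (fun s => A s * chenPhi A s) (nhds x) :=
    ⟨Icc 0 1, hmem, hcont.aestronglyMeasurable measurableSet_Icc⟩
  have hder : HasDerivAt (fun u => ∫ s in (0:ℝ)..u, A s * chenPhi A s)
      (A x * chenPhi A x) x :=
    intervalIntegral.integral_hasDerivAt_right hint hmeas
      ((hcont x hxI).continuousAt hmem)
  have hder2 : HasDerivAt (fun u => 1 + ∫ s in (0:ℝ)..u, A s * chenPhi A s)
      (A x * chenPhi A x) x := hder.const_add 1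
  refine hder2.congr_of_eventuallyEq ?_
  filter_upwards [hmem] with u hu
  exact chenPhi_integral_eq hA hC0 hC hu

lemma gronwall_zero {E : Type*} [NormedAddCommGroup E] [NormedSpace ℝ E]
    {d : ℝ → E} (hd : ContinuousOn d (Icc 0 1)) {C M : ℝ} (hC : 0 ≤ C)
    (hM : ∀ t ∈ Icc (0:ℝ) 1, ‖d t‖ ≤ M)
    (h : ∀ t ∈ Icc (0:ℝ) 1, ‖d t‖ ≤ C * ∫ s in (0:ℝ)..t, ‖d s‖) :
    ∀ t ∈ Icc (0:ℝ) 1, d t = 0 := by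
  have hM0 : 0 ≤ M := le_trans (norm_nonneg _) (hM 0 (left_mem_Icc.2 zero_le_one))
  have claim : ∀ n : ℕ, ∀ t ∈ Icc (0:ℝ) 1, ‖d t‖ ≤ M * (C ^ n * t ^ n / n.factorial) := by
    intro n
    induction n with
    | zero => intro t ht; simpa using hM t ht
    | succ n ih =>
      intro t ht
      have hIcc : Icc (0:ℝ) t ⊆ Icc 0 1 := Icc_subset_Icc le_rfl ht.2
      have hi1 : IntervalIntegrable (fun s => ‖d s‖) volume 0 t :=
        ((hd.norm).mono (uIcc_sub ht)).intervalIntegrable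
      have hi2 : IntervalIntegrable (fun s => (M * C ^ n / n.factorial) * s ^ n) volume 0 t :=
        (Continuous.intervalIntegrable (by continuity) 0 t)
      have h2 : (∫ s in (0:ℝ)..t, ‖d s‖)
          ≤ ∫ s in (0:ℝ)..t, (M * C ^ n / n.factorial) * s ^ n := by
        refine intervalIntegral.integral_mono_on ht.1 hi1 hi2 fun s hs => ?_
        calc ‖d s‖ ≤ M * (C ^ n * s ^ n / n.factorial) := ih s (hIcc hs)
          _ = (M * C ^ n / n.factorial) * s ^ n := by ring
      have h3 : (∫ s in (0:ℝ)..t, (M * C ^ n / n.factorial) * s ^ n)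
          = (M * C ^ n / n.factorial) * (t ^ (n + 1) / (n + 1)) := by
        rw [intervalIntegral.integral_const_mul, integral_pow]
        ring
      have hfac2 : (n.factorial : ℝ) ≠ 0 := by exact_mod_cast Nat.factorial_ne_zero n
      calc ‖d t‖ ≤ C * ∫ s in (0:ℝ)..t, ‖d s‖ := h t ht
        _ ≤ C * ((M * C ^ n / n.factorial) * (t ^ (n + 1) / (n + 1))) := by
            rw [← h3]
            exact mul_le_mul_of_nonneg_left h2 hC
        _ = M * (C ^ (n + 1) * t ^ (n + 1) / (n + 1).factorial) := by
            rw [Nat.factorial_succ]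
            push_cast
            field_simp
            ring
  intro t ht
  have h0 : Filter.Tendsto (fun n : ℕ => M * (C ^ n * t ^ n / n.factorial))
      Filter.atTop (nhds 0) := by
    have heq : (fun n : ℕ => M * (C ^ n * t ^ n / n.factorial))
        = fun n : ℕ => M * ((C * t) ^ n / n.factorial) := by
      funext n; rw [mul_pow]
    rw [heq]
    have := ((Real.summable_pow_div_factorial (C * t)).mul_left M).tendsto_atTop_zero
    exact this
  have hle : ‖d t‖ ≤ 0 :=
    ge_of_tendsto h0 (Filter.Eventually.of_forall fun n => claim n t ht)
  simpa using le_antisymm hle (norm_nonneg _)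


end ChenProofAux

/-- gauge invariance for operator-valued iterated integrals
(Lemma 4.2 at a point base): if `g` is a differentiable path of invertible continuous
linear maps `V ≃ W` with inverse path `ginv`, intertwining `A` and `B` via the gauge
relation `A = g⁻¹ ∘ B ∘ g − g⁻¹ ∘ g'`, then `Φ^A(t) = g(t)⁻¹ ∘ Φ^B(t) ∘ g(0)`. -/
theorem chenPhi_transition_isomorphism
    {V W : Type*} [NormedAddCommGroup V] [NormedSpace ℝ V] [CompleteSpace V]
    [NormedAddCommGroup W] [NormedSpace ℝ W] [CompleteSpace W]
    (A : ℝ → V →L[ℝ] V) (B : ℝ → W →L[ℝ] W)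
    (hA : ContinuousOn A (Icc 0 1)) (hB : ContinuousOn B (Icc 0 1))
    (g g' : ℝ → V →L[ℝ] W) (ginv : ℝ → W →L[ℝ] V)
    (hg : ∀ t ∈ Icc (0:ℝ) 1, HasDerivWithinAt g (g' t) (Icc 0 1) t)
    (hinv_left : ∀ t ∈ Icc (0:ℝ) 1, (ginv t).comp (g t) = ContinuousLinearMap.id ℝ V)
    (hinv_right : ∀ t ∈ Icc (0:ℝ) 1, (g t).comp (ginv t) = ContinuousLinearMap.id ℝ W)
    (hgauge : ∀ t ∈ Icc (0:ℝ) 1,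
      A t = (ginv t).comp ((B t).comp (g t)) - (ginv t).comp (g' t)) :
    ∀ t ∈ Icc (0:ℝ) 1,
      chenPhi A t = (ginv t).comp ((chenPhi B t).comp (g 0)) := by
  classical
  obtain ⟨CA0, hCA0⟩ := isCompact_Icc.exists_bound_of_continuousOn hA
  obtain ⟨CB0, hCB0⟩ := isCompact_Icc.exists_bound_of_continuousOn hB
  set CA := max CA0 0 with hCAdef
  set CB := max CB0 0 with hCBdef
  have hCAnn : (0:ℝ) ≤ CA := le_max_right _ _
  have hCBnn : (0:ℝ) ≤ CB := le_max_right _ _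
  have hCA : ∀ s ∈ Icc (0:ℝ) 1, ‖A s‖ ≤ CA := fun s hs => (hCA0 s hs).trans (le_max_left _ _)
  have hCB : ∀ s ∈ Icc (0:ℝ) 1, ‖B s‖ ≤ CB := fun s hs => (hCB0 s hs).trans (le_max_left _ _)
  have hgc : ContinuousOn g (Icc 0 1) := fun t ht => (hg t ht).continuousWithinAt
  have hPhiA : ContinuousOn (chenPhi A) (Icc 0 1) :=
    ChenProofAux.chenPhi_continuousOn hA hCAnn hCA
  have hPhiB : ContinuousOn (chenPhi B) (Icc 0 1) :=
    ChenProofAux.chenPhi_continuousOn hB hCBnn hCB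
  set G : ℝ → V →L[ℝ] W := fun t => (g t).comp (chenPhi A t) with hGdef
  set H : ℝ → V →L[ℝ] W := fun t => (chenPhi B t).comp (g 0) with hHdef
  have hGc : ContinuousOn G (Icc 0 1) := hgc.clm_comp hPhiA
  have hHc : ContinuousOn H (Icc 0 1) := hPhiB.clm_comp continuousOn_const
  -- integral equation for H
  have hHeq : ∀ t ∈ Icc (0:ℝ) 1, H t = g 0 + ∫ s in (0:ℝ)..t, (B s).comp (H s) := by
    intro t ht
    have hint : IntervalIntegrable (fun s => B s * chenPhi B s) volume 0 t :=
      ((hB.mul hPhiB).mono (ChenProofAux.uIcc_sub ht)).intervalIntegrable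
    have h2 : H t = ((1 : W →L[ℝ] W) + ∫ s in (0:ℝ)..t, B s * chenPhi B s).comp (g 0) := by
      show (chenPhi B t).comp (g 0) = _
      rw [ChenProofAux.chenPhi_integral_eq hB hCBnn hCB ht]
    have h3 : ((∫ s in (0:ℝ)..t, B s * chenPhi B s).comp (g 0) : V →L[ℝ] W)
        = ∫ s in (0:ℝ)..t, (B s * chenPhi B s).comp (g 0) := by
      have := (((ContinuousLinearMap.compL ℝ V W W).flip (g 0)).intervalIntegral_comp_comm hint)
      simpa using this.symm
    rw [h2, ContinuousLinearMap.add_comp, ContinuousLinearMap.one_def,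
      ContinuousLinearMap.id_comp, h3]
    congr 1
  -- derivative of G at interior points
  have hGd : ∀ x ∈ Ioo (0:ℝ) 1, HasDerivAt G ((B x).comp (G x)) x := by
    intro x hx
    have hxI : x ∈ Icc (0:ℝ) 1 := ⟨hx.1.le, hx.2.le⟩
    have hmem : Icc (0:ℝ) 1 ∈ nhds x := Icc_mem_nhds hx.1 hx.2
    have hgd : HasDerivAt g (g' x) x := (hg x hxI).hasDerivAt hmem
    have hPhid := ChenProofAux.chenPhi_hasDerivAt hA hCAnn hCA hx
    have hcomp := hgd.clm_comp hPhid
    have key : (g x).comp (A x) = (B x).comp (g x) - g' x := by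
      rw [hgauge x hxI, ContinuousLinearMap.comp_sub,
        ← ContinuousLinearMap.comp_assoc, hinv_right x hxI, ContinuousLinearMap.id_comp,
        ← ContinuousLinearMap.comp_assoc, hinv_right x hxI, ContinuousLinearMap.id_comp]
    have hBG : (B x).comp (G x)
        = (g' x).comp (chenPhi A x) + (g x).comp (A x * chenPhi A x) := by
      show (B x).comp ((g x).comp (chenPhi A x)) = _
      rw [ContinuousLinearMap.mul_def, ← ContinuousLinearMap.comp_assoc (g x),
        key, ContinuousLinearMap.sub_comp, ← ContinuousLinearMap.comp_assoc]
      abel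
    rw [hBG]
    exact hcomp
  -- integral equation for G
  have hGeq : ∀ t ∈ Icc (0:ℝ) 1, G t = g 0 + ∫ s in (0:ℝ)..t, (B s).comp (G s) := by
    intro t ht
    have hcont' : ContinuousOn (fun s => (B s).comp (G s)) (Icc 0 1) := hB.clm_comp hGc
    have hint : IntervalIntegrable (fun s => (B s).comp (G s)) volume 0 t :=
      (hcont'.mono (ChenProofAux.uIcc_sub ht)).intervalIntegrable
    have heq := intervalIntegral.integral_eq_sub_of_hasDeriv_right_of_le ht.1
      (hGc.mono (Icc_subset_Icc le_rfl ht.2))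
      (fun x hx => ((hGd x ⟨hx.1, lt_of_lt_of_le hx.2 ht.2⟩).hasDerivWithinAt)) hint
    have hG0 : G 0 = g 0 := by
      show (g 0).comp (chenPhi A 0) = g 0
      rw [ChenProofAux.chenPhi_zero, ContinuousLinearMap.one_def, ContinuousLinearMap.comp_id]
    rw [heq, hG0]
    abel
  -- subtraction and Gronwall
  have hdc : ContinuousOn (fun t => G t - H t) (Icc 0 1) := hGc.sub hHc
  have hdeq : ∀ t ∈ Icc (0:ℝ) 1, G t - H t = ∫ s in (0:ℝ)..t, (B s).comp (G s - H s) := by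
    intro t ht
    have hintG : IntervalIntegrable (fun s => (B s).comp (G s)) volume 0 t :=
      ((hB.clm_comp hGc).mono (ChenProofAux.uIcc_sub ht)).intervalIntegrable
    have hintH : IntervalIntegrable (fun s => (B s).comp (H s)) volume 0 t :=
      ((hB.clm_comp hHc).mono (ChenProofAux.uIcc_sub ht)).intervalIntegrable
    rw [hGeq t ht, hHeq t ht, add_sub_add_left_eq_sub,
      ← intervalIntegral.integral_sub hintG hintH]
    refine intervalIntegral.integral_congr fun s hs => ?_
    exact (ContinuousLinearMap.comp_sub _ _ _).symm
  obtain ⟨M0, hM0⟩ := isCompact_Icc.exists_bound_of_continuousOn hdc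
  have hnorm : ∀ t ∈ Icc (0:ℝ) 1,
      ‖G t - H t‖ ≤ CB * ∫ s in (0:ℝ)..t, ‖G s - H s‖ := by
    intro t ht
    have hi1 : IntervalIntegrable (fun s => ‖(B s).comp (G s - H s)‖) volume 0 t :=
      (((hB.clm_comp hdc).mono (ChenProofAux.uIcc_sub ht)).norm).intervalIntegrable
    have hi2 : IntervalIntegrable (fun s => CB * ‖G s - H s‖) volume 0 t :=
      (((hdc.norm).mono (ChenProofAux.uIcc_sub ht)).const_smul CB).intervalIntegrable
    calc ‖G t - H t‖ = ‖∫ s in (0:ℝ)..t, (B s).comp (G s - H s)‖ := by rw [hdeq t ht]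
      _ ≤ ∫ s in (0:ℝ)..t, ‖(B s).comp (G s - H s)‖ :=
          intervalIntegral.norm_integral_le_integral_norm ht.1
      _ ≤ ∫ s in (0:ℝ)..t, CB * ‖G s - H s‖ := by
          refine intervalIntegral.integral_mono_on ht.1 hi1 hi2 fun s hs => ?_
          have hs1 : s ∈ Icc (0:ℝ) 1 := Icc_subset_Icc le_rfl ht.2 hs
          calc ‖(B s).comp (G s - H s)‖ ≤ ‖B s‖ * ‖G s - H s‖ :=
                ContinuousLinearMap.opNorm_comp_le _ _
            _ ≤ CB * ‖G s - H s‖ := mul_le_mul_of_nonneg_right (hCB s hs1) (norm_nonneg _)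
      _ = CB * ∫ s in (0:ℝ)..t, ‖G s - H s‖ := by
          rw [intervalIntegral.integral_const_mul]
  have hzero := ChenProofAux.gronwall_zero hdc hCBnn hM0 hnorm
  intro t ht
  have hGH : G t = H t := sub_eq_zero.mp (hzero t ht)
  have hfin : (ginv t).comp (G t) = chenPhi A t := by
    show (ginv t).comp ((g t).comp (chenPhi A t)) = chenPhi A t
    rw [← ContinuousLinearMap.comp_assoc, hinv_left t ht, ContinuousLinearMap.id_comp]
  rw [← hfin, hGH]
end
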